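/- Let (S, ⊕, ⊗, 0, 1) be a commutative semiring and let w : E → S assign weights to edges of a finite directed multigraph G = (V, E). Define the weight of a path P = (e₁, …, e_k) as w(P) = ⊗_{i=1}^k w(e_i) (empty product equals 1). For any node u and any t ≥ 0, the Bellman-Ford iterate h⁽ᵗ⁾(u,v), defined by h⁽⁰⁾(u,v) = 1 if u = v else 0, and h⁽ᵗ⁾(u,v) = h⁽⁰⁾(u,v) ⊕ ⊕_{(x,r,v)∈E(v)} h⁽ᵗ⁻¹⁾(u,x) ⊗ w(x,r,v), equals the ⊕-sum of w(P) over all paths P from u to v of length at most t. -/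

import Mathlib

/-- `IsPath tl hd u v p`: the list of edges `p` forms a path from `u` to `v`
in the directed multigraph with tail map `tl` and head map `hd`. -/
def IsPath {V E : Type*} (tl hd : E → V) : V → V → List E → Prop
  | u, v, [] => u = v
  | u, v, e :: p => tl e = u ∧ IsPath tl hd (hd e) v p

/-- The weight of a path is the `⊗`-product of its edge weights (empty product is `1`). -/
def pathWeight {E : Type*} {S : Type*} [CommSemiring S] (w : E → S) (p : List E) : S :=
  (p.map w).prod

/-- The Bellman-Ford iterate over a commutative semiring. -/
def bf {V E : Type*} [Fintype E] [DecidableEq V] {S : Type*} [CommSemiring S]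
    (tl hd : E → V) (w : E → S) (u : V) : ℕ → V → S
  | 0, v => if u = v then 1 else 0
  | t + 1, v => (if u = v then 1 else 0) +
      ∑ e ∈ Finset.univ.filter (fun e => hd e = v),
        bf tl hd w u t (tl e) * w e

lemma isPath_concat {V E : Type*} (tl hd : E → V) (u v : V) (p : List E) (e : E) :
    IsPath tl hd u v (p ++ [e]) ↔ IsPath tl hd u (tl e) p ∧ hd e = v := by
  induction p generalizing u with
  | nil => simp [IsPath]; tauto
  | cons f q ih => simp [IsPath, ih]; tauto

lemma pathset_finite {V E : Type*} [Fintype E] (tl hd : E → V) (u v : V) (t : ℕ) :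
    {p : List E | IsPath tl hd u v p ∧ p.length ≤ t}.Finite :=
  Set.Finite.subset (List.finite_length_le E t) (fun _ hp => hp.2)

lemma concat_inj' {E : Type*} {q q' : List E} {e e' : E} (h : q ++ [e] = q' ++ [e']) :
    q = q' ∧ e = e' := by
  rw [← List.concat_eq_append, ← List.concat_eq_append, List.concat_inj] at h
  exact h

/-- Bellman-Ford correctness: `h⁽ᵗ⁾(u,v)` equals the `⊕`-sum of path weights over
all paths from `u` to `v` of length at most `t`. -/
theorem bellman_ford_eq_sum_over_paths
    {V E : Type*} [Fintype E] [DecidableEq V] {S : Type*} [CommSemiring S]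
    (tl hd : E → V) (w : E → S) (u v : V) (t : ℕ) :
    bf tl hd w u t v =
      ∑ᶠ p ∈ {p : List E | IsPath tl hd u v p ∧ p.length ≤ t}, pathWeight w p := by
  induction t generalizing v with
  | zero =>
    have : {p : List E | IsPath tl hd u v p ∧ p.length ≤ 0}
        = if u = v then {([] : List E)} else ∅ := by
      split_ifs with h
      · ext p; cases p <;> simp [IsPath, h]
      · ext p; cases p <;> simp [IsPath, h]
    rw [this, bf]
    split_ifs with h
    · rw [finsum_mem_singleton]; simp [pathWeight]
    · rw [finsum_mem_empty]
  | succ t ih =>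
    set A₀ : Set (List E) := if u = v then {([] : List E)} else ∅ with hA₀
    set B : Set (List E) := ⋃ e ∈ ((Finset.univ.filter (fun e => hd e = v) : Finset E) : Set E),
        (fun p => p ++ [e]) '' {p : List E | IsPath tl hd u (tl e) p ∧ p.length ≤ t} with hB
    have hset : {p : List E | IsPath tl hd u v p ∧ p.length ≤ t + 1} = A₀ ∪ B := by
      ext p
      rcases List.eq_nil_or_concat p with rfl | ⟨q, e, rfl⟩
      · simp only [hA₀, hB, Set.mem_setOf_eq, Set.mem_union]
        constructor
        · rintro ⟨h, -⟩
          exact Or.inl (by simp [IsPath] at h; simp [h])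
        · rintro (h | h)
          · split_ifs at h with hu
            · simp at h; exact ⟨by simpa [IsPath] using hu, by simp⟩
            · simp at h
          · exfalso
            simp only [Set.mem_iUnion, Set.mem_image] at h
            obtain ⟨e, -, q, -, heq⟩ := h
            exact List.not_mem_nil (a := e) (heq ▸ List.mem_append_right q (by simp))
      · simp only [hA₀, hB, List.concat_eq_append, Set.mem_setOf_eq, Set.mem_union, isPath_concat,
          Set.mem_iUnion, Set.mem_image, Finset.coe_filter, Finset.mem_univ, true_and,
          Set.mem_setOf_eq, List.length_append, List.length_singleton]
        constructor
        · rintro ⟨⟨hq, he⟩, hl⟩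
          exact Or.inr ⟨e, he, q, ⟨hq, by omega⟩, rfl⟩
        · rintro (h | ⟨e', he', q', ⟨hq', hl'⟩, heq⟩)
          · split_ifs at h with hu
            · simp at h
            · simp at h
          · obtain ⟨rfl, rfl⟩ := concat_inj' heq
            exact ⟨⟨hq', he'⟩, by omega⟩
    have hfin1 : A₀.Finite := by rw [hA₀]; split_ifs <;> simp
    have hfinT : ∀ e : E, ((fun p => p ++ [e]) ''
        {p : List E | IsPath tl hd u (tl e) p ∧ p.length ≤ t}).Finite :=
      fun e => (pathset_finite tl hd u (tl e) t).image _
    have hfin2 : B.Finite := Set.Finite.biUnion (Finset.finite_toSet _) fun e _ => hfinT e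
    have hdisj : Disjoint A₀ B := by
      rw [Set.disjoint_left]
      intro p hp hp2
      rw [hA₀] at hp
      split_ifs at hp with h
      · simp only [Set.mem_singleton_iff] at hp; subst hp
        simp only [hB, Set.mem_iUnion, Set.mem_image] at hp2
        obtain ⟨e, -, q, -, heq⟩ := hp2
        exact List.not_mem_nil (a := e) (heq ▸ List.mem_append_right q (by simp))
      · simp at hp
    rw [hset, finsum_mem_union hdisj hfin1 hfin2, bf]
    congr 1
    · rw [hA₀]; split_ifs with h
      · rw [finsum_mem_singleton]; simp [pathWeight]
      · rw [finsum_mem_empty]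
    · rw [hB, finsum_mem_biUnion ?_ (Finset.finite_toSet _) (fun e _ => hfinT e)]
      · rw [finsum_mem_coe_finset]
        apply Finset.sum_congr rfl
        intro e _
        rw [finsum_mem_image (fun a _ b _ h => (concat_inj' h).1)]
        rw [ih (tl e),
          finsum_mem_eq_finite_toFinset_sum _ (pathset_finite tl hd u (tl e) t),
          finsum_mem_eq_finite_toFinset_sum _ (pathset_finite tl hd u (tl e) t),
          Finset.sum_mul]
        apply Finset.sum_congr rfl
        intro p _
        simp [pathWeight]
      · intro e he f hf hef
        simp only [Function.onFun]
        rw [Set.disjoint_left]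
        rintro p ⟨q, -, rfl⟩ ⟨q', -, heq⟩
        exact hef ((concat_inj' heq.symm).2 ▸ rfl)
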